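/- Fix $n, N \ge 1$ and $0 < \lambda \le \Lambda$. Let $\pi = (-1, \pi_2, \dots, \pi_n) \in \mathbb{R}^n$ (so $\pi_1 = -1$). Let $A_{ij}^{\alpha\beta}, F_\alpha^i, \zeta_\alpha^i$ ($1 \le i,j \le N$, $1 \le \alpha,\beta \le n$) be real constants with the ellipticity bounds $\lambda|\xi|^2 \le \sum_{i,j,\alpha,\beta} A_{ij}^{\alpha\beta}\xi_\alpha^i \xi_\beta^j$ for all $\xi \in \mathbb{R}^{Nn}$ and $|A_{ij}^{\alpha\beta}| \le \Lambda$. Define $U \in \mathbb{R}^{Nn}$ by $U_1^i = \sum_\alpha \pi_\alpha[(\sum_{j,\beta} A_{ij}^{\alpha\beta}\zeta_\beta^j) - F_\alpha^i]$ and $U_\beta^i = \zeta_\beta^i + \pi_\beta \zeta_1^i$ for $\beta = 2, \dots, n$. Then $|\zeta| \le c(|U| + |F|)$ where $c$ depends only on $n, N, \lambda, \Lambda$. -/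

import Mathlib

open Finset

private lemma sum_abs_le' {m : ℕ} (g : Fin m → ℝ) (b : ℝ) (hb : ∀ x, |g x| ≤ b) :
    |∑ x, g x| ≤ m * b := by
  calc |∑ x, g x| ≤ ∑ x, |g x| := Finset.abs_sum_le_sum_abs _ _
    _ ≤ ∑ _x : Fin m, b := Finset.sum_le_sum fun x _ => hb x
    _ = m * b := by simp [Finset.sum_const, Finset.card_univ, nsmul_eq_mul]

set_option maxHeartbeats 1000000 in
/-- The conormal-type quantities `U` control the full gradient matrix `ζ`:
`|ζ| ≤ c (|U| + |F|)` with `c = c(n, N, λ, Λ)`. -/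
theorem stmt_2 (n N : ℕ) [NeZero n] [NeZero N] (lam Lam : ℝ)
    (hlam : 0 < lam) (hLam : lam ≤ Lam) :
    ∃ c > 0, ∀ (π : Fin n → ℝ) (A : Fin N → Fin N → Fin n → Fin n → ℝ)
      (F ζ U : Fin n → Fin N → ℝ),
      π 0 = -1 →
      (∀ ξ : Fin n → Fin N → ℝ,
        lam * ∑ α, ∑ i, (ξ α i) ^ 2 ≤ ∑ i, ∑ j, ∑ α, ∑ β, A i j α β * ξ α i * ξ β j) →
      (∀ i j α β, |A i j α β| ≤ Lam) →
      (∀ i, U 0 i = ∑ α, π α * ((∑ j, ∑ β, A i j α β * ζ β j) - F α i)) →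
      (∀ i, ∀ β : Fin n, β ≠ 0 → U β i = ζ β i + π β * ζ 0 i) →
      Real.sqrt (∑ α, ∑ i, (ζ α i) ^ 2) ≤
        c * (Real.sqrt (∑ α, ∑ i, (U α i) ^ 2) + Real.sqrt (∑ α, ∑ i, (F α i) ^ 2)) := by
  have hLam0 : 0 ≤ Lam := le_trans hlam.le hLam
  have hn1 : (1:ℝ) ≤ (n:ℝ) := by exact_mod_cast Nat.one_le_iff_ne_zero.mpr (NeZero.ne n)
  have hN1 : (1:ℝ) ≤ (N:ℝ) := by exact_mod_cast Nat.one_le_iff_ne_zero.mpr (NeZero.ne N)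
  have hNn0 : (0:ℝ) ≤ Lam * N * n^2 :=
    mul_nonneg (mul_nonneg hLam0 (by linarith)) (by positivity)
  set K : ℝ := N * (Lam * N * n^2 + 1 + n) with hKdef
  have hK0 : 0 < K := mul_pos (by linarith) (by linarith)
  have hKl : 0 < 1 + K / lam := by
    have := div_pos hK0 hlam; linarith
  refine ⟨N * n * (1 + K / lam),
    mul_pos (mul_pos (by linarith) (by linarith)) hKl, ?_⟩
  intro π A F ζ U hπ0 hell hA hU0 hUβ
  set u := Real.sqrt (∑ α, ∑ i, (U α i) ^ 2) with hudef
  set f := Real.sqrt (∑ α, ∑ i, (F α i) ^ 2) with hfdef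
  set P := Real.sqrt (∑ α, (π α) ^ 2) with hPdef
  set Z := Real.sqrt (∑ i, (ζ 0 i) ^ 2) with hZdef
  have hu0 : 0 ≤ u := Real.sqrt_nonneg _
  have hf0 : 0 ≤ f := Real.sqrt_nonneg _
  have hP0 : 0 ≤ P := Real.sqrt_nonneg _
  have hZ0 : 0 ≤ Z := Real.sqrt_nonneg _
  -- entrywise bounds
  have hPle : ∀ α, |π α| ≤ P := by
    intro α
    rw [← Real.sqrt_sq_eq_abs]
    exact Real.sqrt_le_sqrt
      (Finset.single_le_sum (f := fun α => (π α)^2) (fun _ _ => sq_nonneg _) (mem_univ α))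
  have hP1 : 1 ≤ P := by
    have := hPle 0
    rw [hπ0] at this
    simpa using this
  have hZle : ∀ i, |ζ 0 i| ≤ Z := by
    intro i
    rw [← Real.sqrt_sq_eq_abs]
    exact Real.sqrt_le_sqrt
      (Finset.single_le_sum (f := fun i => (ζ 0 i)^2) (fun _ _ => sq_nonneg _) (mem_univ i))
  have huB : ∀ β j, |U β j| ≤ u := by
    intro β j
    rw [← Real.sqrt_sq_eq_abs]
    refine Real.sqrt_le_sqrt ?_
    calc (U β j)^2 ≤ ∑ i, (U β i)^2 :=
          Finset.single_le_sum (f := fun i => (U β i)^2) (fun _ _ => sq_nonneg _) (mem_univ j)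
      _ ≤ ∑ α, ∑ i, (U α i)^2 :=
          Finset.single_le_sum (f := fun α => ∑ i, (U α i)^2)
            (fun _ _ => Finset.sum_nonneg fun _ _ => sq_nonneg _) (mem_univ β)
  have hfB : ∀ α j, |F α j| ≤ f := by
    intro α j
    rw [← Real.sqrt_sq_eq_abs]
    refine Real.sqrt_le_sqrt ?_
    calc (F α j)^2 ≤ ∑ i, (F α i)^2 :=
          Finset.single_le_sum (f := fun i => (F α i)^2) (fun _ _ => sq_nonneg _) (mem_univ j)
      _ ≤ ∑ α', ∑ i, (F α' i)^2 :=
          Finset.single_le_sum (f := fun α' => ∑ i, (F α' i)^2)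
            (fun _ _ => Finset.sum_nonneg fun _ _ => sq_nonneg _) (mem_univ α)
  -- the auxiliary matrix V
  set V : Fin n → Fin N → ℝ := fun β j => if β = 0 then 0 else U β j with hVdef
  have hV : ∀ β j, π β * ζ 0 j = V β j - ζ β j := by
    intro β j
    by_cases hβ : β = 0
    · subst hβ; simp [hVdef, hπ0]
    · have := hUβ j β hβ
      simp only [hVdef, if_neg hβ]
      linarith
  have hVB : ∀ β j, |V β j| ≤ u := by
    intro β j
    by_cases hβ : β = 0
    · simp [hVdef, hβ, hu0]
    · simpa [hVdef, hβ] using huB β j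
  -- ellipticity applied to ξ = π ⊗ ζ₀
  have hQle := hell (fun α i => π α * ζ 0 i)
  have hsq : ∑ α, ∑ i, (π α * ζ 0 i)^2 = (∑ α, (π α)^2) * (∑ i, (ζ 0 i)^2) := by
    rw [Finset.sum_mul_sum]
    exact Finset.sum_congr rfl fun α _ => Finset.sum_congr rfl fun i _ => by ring
  have hPsq : P^2 = ∑ α, (π α)^2 := Real.sq_sqrt (Finset.sum_nonneg fun _ _ => sq_nonneg _)
  have hZsq : Z^2 = ∑ i, (ζ 0 i)^2 := Real.sq_sqrt (Finset.sum_nonneg fun _ _ => sq_nonneg _)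
  have hlow : lam * (P^2 * Z^2) ≤
      ∑ i, ∑ j, ∑ α, ∑ β, A i j α β * (π α * ζ 0 i) * (π β * ζ 0 j) := by
    rw [hPsq, hZsq, ← hsq]; exact hQle
  -- identity: rewrite the quadratic form row by row
  have Hid : ∀ i, ∑ j, ∑ α, ∑ β, A i j α β * (π α * ζ 0 i) * (π β * ζ 0 j)
      = ζ 0 i * ((∑ α, π α * (∑ j, ∑ β, A i j α β * V β j))
          - (U 0 i + ∑ α, π α * F α i)) := by
    intro i
    have h1 : ∀ α, ∑ j, ∑ β, A i j α β * (π β * ζ 0 j)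
        = (∑ j, ∑ β, A i j α β * V β j) - (∑ j, ∑ β, A i j α β * ζ β j) := by
      intro α
      rw [← Finset.sum_sub_distrib]
      refine Finset.sum_congr rfl fun j _ => ?_
      rw [← Finset.sum_sub_distrib]
      refine Finset.sum_congr rfl fun β _ => ?_
      rw [hV]; ring
    have h2 : U 0 i + ∑ α, π α * F α i
        = ∑ α, π α * (∑ j, ∑ β, A i j α β * ζ β j) := by
      rw [hU0 i, ← Finset.sum_add_distrib]
      exact Finset.sum_congr rfl fun α _ => by ring
    calc ∑ j, ∑ α, ∑ β, A i j α β * (π α * ζ 0 i) * (π β * ζ 0 j)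
        = ∑ α, ∑ j, ∑ β, A i j α β * (π α * ζ 0 i) * (π β * ζ 0 j) := Finset.sum_comm
      _ = ∑ α, (π α * ζ 0 i) * ∑ j, ∑ β, A i j α β * (π β * ζ 0 j) := by
          refine Finset.sum_congr rfl fun α _ => ?_
          rw [Finset.mul_sum]
          refine Finset.sum_congr rfl fun j _ => ?_
          rw [Finset.mul_sum]
          exact Finset.sum_congr rfl fun β _ => by ring
      _ = ∑ α, (π α * ζ 0 i) *
            ((∑ j, ∑ β, A i j α β * V β j) - (∑ j, ∑ β, A i j α β * ζ β j)) :=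
          Finset.sum_congr rfl fun α _ => by rw [h1]
      _ = ζ 0 i * ((∑ α, π α * (∑ j, ∑ β, A i j α β * V β j))
            - (∑ α, π α * (∑ j, ∑ β, A i j α β * ζ β j))) := by
          rw [mul_sub, Finset.mul_sum, Finset.mul_sum, ← Finset.sum_sub_distrib]
          exact Finset.sum_congr rfl fun α _ => by ring
      _ = _ := by rw [← h2]
  -- upper bound on the quadratic form
  have hDbound : ∀ i,
      |ζ 0 i * ((∑ α, π α * (∑ j, ∑ β, A i j α β * V β j))
          - (U 0 i + ∑ α, π α * F α i))|
        ≤ Z * (P * ((Lam * N * n^2 + 1 + n) * (u + f))) := by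
    intro i
    have hT : |∑ α, π α * (∑ j, ∑ β, A i j α β * V β j)|
        ≤ n * (P * (N * (n * (Lam * u)))) := by
      refine sum_abs_le' _ _ fun α => ?_
      rw [abs_mul]
      refine mul_le_mul (hPle α) ?_ (abs_nonneg _) hP0
      refine sum_abs_le' _ _ fun j => ?_
      refine sum_abs_le' _ _ fun β => ?_
      rw [abs_mul]
      exact mul_le_mul (hA i j α β) (hVB β j) (abs_nonneg _) hLam0
    have hG : |∑ α, π α * F α i| ≤ n * (P * f) := by
      refine sum_abs_le' _ _ fun α => ?_
      rw [abs_mul]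
      exact mul_le_mul (hPle α) (hfB α i) (abs_nonneg _) hP0
    have hU0i : |U 0 i| ≤ u := huB 0 i
    set T : ℝ := ∑ α, π α * (∑ j, ∑ β, A i j α β * V β j) with hTdef
    set G : ℝ := ∑ α, π α * F α i with hGdef
    have hD : |T - (U 0 i + G)| ≤ P * ((Lam * N * n^2 + 1 + n) * (u + f)) := by
      have habs : |T - (U 0 i + G)| ≤ |T| + (|U 0 i| + |G|) := by
        calc |T - (U 0 i + G)| ≤ |T| + |U 0 i + G| := abs_sub _ _
          _ ≤ _ := by have := abs_add_le (U 0 i) G; linarith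
      have hPu : u ≤ P * u := by
        calc u = 1 * u := (one_mul u).symm
          _ ≤ P * u := mul_le_mul_of_nonneg_right hP1 hu0
      have h1 : (0:ℝ) ≤ Lam * (N:ℝ) * (n:ℝ)^2 * (P * f) :=
        mul_nonneg hNn0 (mul_nonneg hP0 hf0)
      have h2 : (0:ℝ) ≤ P * f := mul_nonneg hP0 hf0
      have h3 : (0:ℝ) ≤ (n:ℝ) * (P * u) :=
        mul_nonneg (by linarith) (mul_nonneg hP0 hu0)
      linarith [habs, hT, hG, hU0i, h1, h2, h3, hPu]
    calc |ζ 0 i * (T - (U 0 i + G))| = |ζ 0 i| * |T - (U 0 i + G)| := abs_mul _ _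
      _ ≤ Z * (P * ((Lam * N * n^2 + 1 + n) * (u + f))) :=
          mul_le_mul (hZle i) hD (abs_nonneg _) hZ0
  have hup : ∑ i, ∑ j, ∑ α, ∑ β, A i j α β * (π α * ζ 0 i) * (π β * ζ 0 j)
      ≤ N * (Z * (P * ((Lam * N * n^2 + 1 + n) * (u + f)))) := by
    calc ∑ i, ∑ j, ∑ α, ∑ β, A i j α β * (π α * ζ 0 i) * (π β * ζ 0 j)
        = ∑ i, ζ 0 i * ((∑ α, π α * (∑ j, ∑ β, A i j α β * V β j))
            - (U 0 i + ∑ α, π α * F α i)) := Finset.sum_congr rfl fun i _ => Hid i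
      _ ≤ |∑ i, ζ 0 i * ((∑ α, π α * (∑ j, ∑ β, A i j α β * V β j))
            - (U 0 i + ∑ α, π α * F α i))| := le_abs_self _
      _ ≤ N * (Z * (P * ((Lam * N * n^2 + 1 + n) * (u + f)))) :=
          sum_abs_le' _ _ fun i => hDbound i
  -- deduce P * Z ≤ (K/lam) (u+f)
  have hkey : lam * (P * Z) * (P * Z) ≤ K * (u + f) * (P * Z) := by
    calc lam * (P * Z) * (P * Z) = lam * (P^2 * Z^2) := by ring
      _ ≤ ∑ i, ∑ j, ∑ α, ∑ β, A i j α β * (π α * ζ 0 i) * (π β * ζ 0 j) := hlow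
      _ ≤ N * (Z * (P * ((Lam * N * n^2 + 1 + n) * (u + f)))) := hup
      _ = K * (u + f) * (P * Z) := by rw [hKdef]; ring
  have hPZ : P * Z ≤ K / lam * (u + f) := by
    have hkey2 : lam * (P * Z) ≤ K * (u + f) := by
      rcases eq_or_lt_of_le (mul_nonneg hP0 hZ0) with h | h
      · rw [← h]
        have : (0:ℝ) ≤ K * (u + f) := mul_nonneg hK0.le (by linarith)
        linarith
      · exact le_of_mul_le_mul_right hkey h
    rw [div_mul_eq_mul_div, le_div_iff₀ hlam]
    linarith
  -- entrywise bound on ζ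
  have hζ : ∀ (α : Fin n) i, |ζ α i| ≤ (1 + K / lam) * (u + f) := by
    intro α i
    have hZPZ : Z ≤ P * Z := by
      calc Z = 1 * Z := (one_mul Z).symm
        _ ≤ P * Z := mul_le_mul_of_nonneg_right hP1 hZ0
    have hq : 0 ≤ K / lam := (div_pos hK0 hlam).le
    have hfin : (K / lam) * (u + f) ≤ (1 + K / lam) * (u + f) := by nlinarith
    by_cases hα : α = 0
    · subst hα
      calc |ζ 0 i| ≤ Z := hZle i
        _ ≤ P * Z := hZPZ
        _ ≤ K / lam * (u + f) := hPZ
        _ ≤ (1 + K / lam) * (u + f) := hfin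
    · have h := hUβ i α hα
      have hrw : ζ α i = U α i - π α * ζ 0 i := by linarith
      rw [hrw]
      calc |U α i - π α * ζ 0 i| ≤ |U α i| + |π α * ζ 0 i| := abs_sub _ _
        _ ≤ u + P * Z := by
            have := huB α i
            have h2 : |π α * ζ 0 i| ≤ P * Z := by
              rw [abs_mul]
              exact mul_le_mul (hPle α) (hZle i) (abs_nonneg _) hP0
            linarith
        _ ≤ (1 + K / lam) * (u + f) := by nlinarith
  -- sum up
  have hsum : ∑ α, ∑ i, (ζ α i)^2 ≤ (N * n * (1 + K / lam) * (u + f))^2 := by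
    have hstep : ∑ α, ∑ i, (ζ α i)^2 ≤ (n * N : ℝ) * ((1 + K / lam) * (u + f))^2 := by
      calc ∑ α, ∑ i, (ζ α i)^2
          ≤ ∑ _α : Fin n, ∑ _i : Fin N, ((1 + K / lam) * (u + f))^2 := by
            refine Finset.sum_le_sum fun α _ => Finset.sum_le_sum fun i _ => ?_
            calc (ζ α i)^2 = |ζ α i|^2 := (sq_abs _).symm
              _ ≤ ((1 + K / lam) * (u + f))^2 :=
                  pow_le_pow_left₀ (abs_nonneg _) (hζ α i) 2
        _ = (n * N : ℝ) * ((1 + K / lam) * (u + f))^2 := by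
            simp [Finset.sum_const, Finset.card_univ, nsmul_eq_mul]; ring
    have ht0 : (0:ℝ) ≤ ((1 + K / lam) * (u + f))^2 := sq_nonneg _
    have hnN1 : (1:ℝ) ≤ (n:ℝ) * N := by nlinarith
    calc ∑ α, ∑ i, (ζ α i)^2 ≤ (n * N : ℝ) * ((1 + K / lam) * (u + f))^2 := hstep
      _ ≤ ((n:ℝ) * N)^2 * ((1 + K / lam) * (u + f))^2 := by
          have hmul := mul_le_mul_of_nonneg_right hnN1
            (mul_nonneg (le_trans zero_le_one hnN1) ht0)
          nlinarith [hmul]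
      _ = (N * n * (1 + K / lam) * (u + f))^2 := by ring
  calc Real.sqrt (∑ α, ∑ i, (ζ α i)^2)
      ≤ Real.sqrt ((N * n * (1 + K / lam) * (u + f))^2) := Real.sqrt_le_sqrt hsum
    _ = N * n * (1 + K / lam) * (u + f) := Real.sqrt_sq (by positivity)
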